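/- Let 𝓕 be the collection of (ε,K)-Følner sets in Y, modulo null sets, ordered by inclusion up to null sets. Then (𝓕/∼, ⊑) has maximal elements (provided it is nonempty). -/

import Mathlib

open MeasureTheory Set

/-- An algebraic groupoid: a set `G` with a distinguished unit space,
source and range maps, a (total, but only meaningful on composable pairs)
multiplication and an inverse. -/
structure AlgGroupoid (G : Type*) where
  unitSpace : Set G
  s : G → G
  r : G → G
  mul : G → G → G
  inv : G → G
  s_mem : ∀ γ, s γ ∈ unitSpace
  r_mem : ∀ γ, r γ ∈ unitSpace
  s_unit : ∀ x ∈ unitSpace, s x = x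
  r_unit : ∀ x ∈ unitSpace, r x = x
  s_mul : ∀ γ₁ γ₂, s γ₁ = r γ₂ → s (mul γ₁ γ₂) = s γ₂
  r_mul : ∀ γ₁ γ₂, s γ₁ = r γ₂ → r (mul γ₁ γ₂) = r γ₁
  mul_assoc' : ∀ γ₁ γ₂ γ₃, s γ₁ = r γ₂ → s γ₂ = r γ₃ →
    mul (mul γ₁ γ₂) γ₃ = mul γ₁ (mul γ₂ γ₃)
  unit_mul : ∀ γ, mul (r γ) γ = γ
  mul_unit : ∀ γ, mul γ (s γ) = γ
  s_inv : ∀ γ, s (inv γ) = r γ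
  r_inv : ∀ γ, r (inv γ) = s γ
  mul_inv : ∀ γ, mul γ (inv γ) = r γ
  inv_mul : ∀ γ, mul (inv γ) γ = s γ

namespace AlgGroupoid

variable {G : Type*} (𝒢 : AlgGroupoid G)

/-- `A⁻¹ = {γ⁻¹ : γ ∈ A}`. -/
def invSet (A : Set G) : Set G := 𝒢.inv '' A

/-- `A · B = {γ₁γ₂ : γ₁ ∈ A, γ₂ ∈ B, s(γ₁) = r(γ₂)}`. -/
def mulSet (A B : Set G) : Set G :=
  {γ | ∃ γ₁ ∈ A, ∃ γ₂ ∈ B, 𝒢.s γ₁ = 𝒢.r γ₂ ∧ γ = 𝒢.mul γ₁ γ₂}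

/-- `r (K ⋅ A)` for `A` a subset of the unit space. -/
def rMul (K A : Set G) : Set G := 𝒢.r '' {γ | γ ∈ K ∧ 𝒢.s γ ∈ A}

/-- A length function on a groupoid. -/
structure IsLength (ℓ : G → ℝ) : Prop where
  nonneg : ∀ γ, 0 ≤ ℓ γ
  unit_zero : ∀ x ∈ 𝒢.unitSpace, ℓ x = 0
  inv_eq : ∀ γ, ℓ (𝒢.inv γ) = ℓ γ
  subadd : ∀ γ₁ γ₂, 𝒢.s γ₁ = 𝒢.r γ₂ → ℓ (𝒢.mul γ₁ γ₂) ≤ ℓ γ₁ + ℓ γ₂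

/-- A bisection: both source and range maps are injective on it. -/
def IsBisection (K : Set G) : Prop := Set.InjOn 𝒢.s K ∧ Set.InjOn 𝒢.r K

/-- `ℓ(K) ≤ L`. -/
def lengthLE (ℓ : G → ℝ) (K : Set G) (L : ℝ) : Prop := ∀ γ ∈ K, ℓ γ ≤ L

variable [MeasurableSpace G]

/-- An admissible bisection: the source and range sets are measurable, the induced
bijection `τ_K = r|_K ∘ (s|_K)⁻¹` is a measure-class-preserving measurable
isomorphism (formulated at the level of sets), and `ℓ(K) < ∞`. -/
structure IsAdmissible (ℓ : G → ℝ) (μ : Measure G) (K : Set G) : Prop where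
  bisection : 𝒢.IsBisection K
  source_meas : MeasurableSet (𝒢.s '' K)
  range_meas : MeasurableSet (𝒢.r '' K)
  image_meas : ∀ A : Set G, MeasurableSet A → A ⊆ 𝒢.s '' K → MeasurableSet (𝒢.rMul K A)
  preimage_meas : ∀ B : Set G, MeasurableSet B → B ⊆ 𝒢.r '' K →
    MeasurableSet (𝒢.rMul (𝒢.invSet K) B)
  null_iff : ∀ A : Set G, MeasurableSet A → A ⊆ 𝒢.s '' K →
    (μ (𝒢.rMul K A) = 0 ↔ μ A = 0)
  length_bdd : ∃ L : ℝ, ∀ γ ∈ K, ℓ γ ≤ L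

/-- `K` is decomposable: a finite union of admissible bisections. -/
def IsDecomposable (ℓ : G → ℝ) (μ : Measure G) (K : Set G) : Prop :=
  ∃ (N : ℕ) (Ks : Fin N → Set G),
    (∀ i, 𝒢.IsAdmissible ℓ μ (Ks i)) ∧ K = ⋃ i, Ks i

/-- `K` is unital symmetric `N`-decomposable. -/
def IsUSDecomposable (ℓ : G → ℝ) (μ : Measure G) (N : ℕ) (K : Set G) : Prop :=
  ∃ Ks : Fin N → Set G,
    (∀ i, 𝒢.IsAdmissible ℓ μ (Ks i)) ∧ K = ⋃ i, Ks i ∧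
    (∃ i, Ks i = 𝒢.unitSpace) ∧
    (∃ σ : Equiv.Perm (Fin N), ∀ i, 𝒢.invSet (Ks i) = Ks (σ i))

/-- `𝒢` is asymptotically expanding in measure `μ`. -/
def AsympExpanding (ℓ : G → ℝ) (μ : Measure G) : Prop :=
  ∀ α : ℝ, 0 < α → α ≤ 1 / 2 →
    ∃ (C L : ℝ) (N : ℕ) (K : Set G), 0 < C ∧
      𝒢.IsUSDecomposable ℓ μ N K ∧ lengthLE ℓ K L ∧
      ∀ A : Set G, MeasurableSet A → A ⊆ 𝒢.unitSpace →
        α ≤ (μ A).toReal → (μ A).toReal ≤ 1 / 2 →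
        C * (μ A).toReal < (μ (𝒢.rMul K A \ A)).toReal

/-- `Y` is a domain of asymptotic expansion. -/
def DomainAsympExp (ℓ : G → ℝ) (μ : Measure G) (Y : Set G) : Prop :=
  ∀ α : ℝ, 0 < α → α ≤ 1 / 2 →
    ∃ (C L : ℝ) (N : ℕ) (K : Set G), 0 < C ∧
      𝒢.IsUSDecomposable ℓ μ N K ∧ lengthLE ℓ K L ∧
      ∀ A : Set G, MeasurableSet A → A ⊆ Y →
        α * (μ Y).toReal ≤ (μ A).toReal → (μ A).toReal ≤ (μ Y).toReal / 2 →
        C * (μ A).toReal < (μ ((𝒢.rMul K A \ A) ∩ Y)).toReal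

end AlgGroupoid

/-- `F` is an `(ε,K)`-Følner set in `Y`. -/
def AlgGroupoid.IsFolner {G : Type*} [MeasurableSpace G] (𝒢 : AlgGroupoid G)
    (μ : MeasureTheory.Measure G) (Y K : Set G) (ε : ℝ) (F : Set G) : Prop :=
  MeasurableSet F ∧ F ⊆ Y ∧ (μ F).toReal ≤ (μ Y).toReal / 2 ∧
    (μ ((𝒢.rMul K F \ F) ∩ Y)).toReal ≤ ε * (μ F).toReal

/-- `rMul` is monotone in the second argument. -/
lemma AlgGroupoid.rMul_mono' {G : Type*} (𝒢 : AlgGroupoid G) (K : Set G) {A B : Set G}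
    (h : A ⊆ B) : 𝒢.rMul K A ⊆ 𝒢.rMul K B :=
  Set.image_mono (fun _ hγ => ⟨hγ.1, h hγ.2⟩)

/-- the partially ordered set of `(ε,K)`-Følner sets in `Y` modulo null
sets, ordered by inclusion up to null sets, has maximal elements (provided it is
nonempty). -/
theorem stmt7 {G : Type*} [MeasurableSpace G] (𝒢 : AlgGroupoid G) (ℓ : G → ℝ)
    (μ : MeasureTheory.Measure G) [MeasureTheory.IsProbabilityMeasure μ]
    (Y K : Set G) (hY : MeasurableSet Y) (hYsub : Y ⊆ 𝒢.unitSpace)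
    (hK : 𝒢.IsDecomposable ℓ μ K) (ε : ℝ) (hε : 0 < ε)
    (F₀ : Set G) (hF₀ : 𝒢.IsFolner μ Y K ε F₀) :
    ∃ F : Set G, 𝒢.IsFolner μ Y K ε F ∧
      ∀ F' : Set G, 𝒢.IsFolner μ Y K ε F' → μ (F \ F') = 0 → μ (F' \ F) = 0 := by
  classical
  set P : Set G → Prop := fun F => 𝒢.IsFolner μ Y K ε F with hPdef
  set m : Set G → ENNReal := fun A => sSup (μ '' {F' | P F' ∧ μ (A \ F') = 0}) with hmdef
  have m_le_one : ∀ A, m A ≤ 1 := by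
    intro A
    refine sSup_le ?_
    rintro x ⟨F', _, rfl⟩
    exact prob_le_one
  have step : ∀ (A : Set G) (δ : ENNReal), δ ≠ 0 → P A →
      ∃ B, P B ∧ μ (A \ B) = 0 ∧ m A ≤ μ B + δ := by
    intro A δ hδ hA
    by_cases h : m A ≤ δ
    · exact ⟨A, hA, by simp, le_trans h le_add_self⟩
    · push_neg at h
      have hne : m A ≠ 0 := (lt_of_le_of_lt zero_le h).ne'
      have htop : m A ≠ ⊤ := ne_top_of_le_ne_top ENNReal.one_ne_top (m_le_one A)
      have hlt : m A - δ < m A := ENNReal.sub_lt_self htop hne hδ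
      obtain ⟨x, hx, hxlt⟩ := lt_sSup_iff.mp hlt
      obtain ⟨B, hB, rfl⟩ := hx
      exact ⟨B, hB.1, hB.2, tsub_le_iff_right.mp hxlt.le⟩
  choose nextB hnextP hnextNull hnextSup using step
  set δs : ℕ → ENNReal := fun n => ((n + 1 : ℕ) : ENNReal)⁻¹ with hδsdef
  have hδs : ∀ n, δs n ≠ 0 := by
    intro n
    simp [hδsdef]
  let Fs : ℕ → {A : Set G // P A} := fun n =>
    Nat.rec ⟨F₀, hF₀⟩ (fun n p => ⟨nextB p.1 (δs n) (hδs n) p.2,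
      hnextP p.1 (δs n) (hδs n) p.2⟩) n
  set Fn : ℕ → Set G := fun n => (Fs n).1 with hFndef
  have hPn : ∀ n, P (Fn n) := fun n => (Fs n).2
  have hNull : ∀ n, μ (Fn n \ Fn (n + 1)) = 0 := fun n =>
    hnextNull (Fs n).1 (δs n) (hδs n) (Fs n).2
  have hSup : ∀ n, m (Fn n) ≤ μ (Fn (n + 1)) + δs n := fun n =>
    hnextSup (Fs n).1 (δs n) (hδs n) (Fs n).2
  set N : Set G := ⋃ n, Fn n \ Fn (n + 1) with hNdef
  have hNnull : μ N = 0 := measure_iUnion_null hNull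
  have hNmeas : MeasurableSet N :=
    MeasurableSet.iUnion fun n => ((hPn n).1.diff (hPn (n + 1)).1)
  set Gs : ℕ → Set G := fun n => Fn n \ N with hGsdef
  have Gmono : Monotone Gs := by
    refine monotone_nat_of_le_succ ?_
    intro n x hx
    refine ⟨?_, hx.2⟩
    by_contra hc
    exact hx.2 (Set.mem_iUnion.mpr ⟨n, hx.1, hc⟩)
  set Gset : Set G := ⋃ n, Gs n with hGdef
  have hGmeas : MeasurableSet Gset :=
    MeasurableSet.iUnion fun n => ((hPn n).1.diff hNmeas)
  have hGsubY : Gset ⊆ Y :=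
    Set.iUnion_subset fun n => Set.diff_subset.trans (hPn n).2.1
  have hGiSup : μ Gset = ⨆ n, μ (Gs n) := Directed.measure_iUnion Gmono.directed_le
  have hFsub : ∀ n, Fn n ⊆ Gs n ∪ N := by
    intro n x hx
    by_cases hxN : x ∈ N
    · exact Or.inr hxN
    · exact Or.inl ⟨hx, hxN⟩
  have hFG : ∀ n, μ (Fn n) ≤ μ Gset := by
    intro n
    calc μ (Fn n) ≤ μ (Gs n ∪ N) := measure_mono (hFsub n)
    _ ≤ μ (Gs n) + μ N := measure_union_le _ _
    _ = μ (Gs n) := by rw [hNnull, add_zero]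
    _ ≤ μ Gset := measure_mono (Set.subset_iUnion Gs n)
  have hGfin : μ Gset ≠ ⊤ := measure_ne_top μ _
  -- boundary of each `Gs n` is essentially contained in the boundary of `Fn n`
  have hbdd : ∀ n, (𝒢.rMul K (Gs n) \ Gs n) ∩ Y ⊆ ((𝒢.rMul K (Fn n) \ Fn n) ∩ Y) ∪ N := by
    intro n x hx
    by_cases hxF : x ∈ Fn n
    · exact Or.inr (by_contra fun hN => hx.1.2 ⟨hxF, hN⟩)
    · exact Or.inl ⟨⟨𝒢.rMul_mono' K Set.diff_subset hx.1.1, hxF⟩, hx.2⟩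
  have hbddμ : ∀ n, μ ((𝒢.rMul K (Gs n) \ Gs n) ∩ Y) ≤
      ENNReal.ofReal (ε * (μ Gset).toReal) := by
    intro n
    have h1 : μ ((𝒢.rMul K (Gs n) \ Gs n) ∩ Y) ≤ μ ((𝒢.rMul K (Fn n) \ Fn n) ∩ Y) := by
      calc μ ((𝒢.rMul K (Gs n) \ Gs n) ∩ Y) ≤ μ (((𝒢.rMul K (Fn n) \ Fn n) ∩ Y) ∪ N) :=
            measure_mono (hbdd n)
      _ ≤ μ ((𝒢.rMul K (Fn n) \ Fn n) ∩ Y) + μ N := measure_union_le _ _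
      _ = _ := by rw [hNnull, add_zero]
    have h2 : μ ((𝒢.rMul K (Fn n) \ Fn n) ∩ Y) ≤ ENNReal.ofReal (ε * (μ (Fn n)).toReal) := by
      refine (ENNReal.le_ofReal_iff_toReal_le (measure_ne_top μ _) ?_).mpr (hPn n).2.2.2
      exact mul_nonneg hε.le ENNReal.toReal_nonneg
    refine le_trans h1 (le_trans h2 (ENNReal.ofReal_le_ofReal ?_))
    exact mul_le_mul_of_nonneg_left (ENNReal.toReal_mono hGfin (hFG n)) hε.le
  refine ⟨Gset, ⟨hGmeas, hGsubY, ?_, ?_⟩, ?_⟩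
  · -- μ(Gset) ≤ μ(Y)/2
    have h : μ Gset ≤ ENNReal.ofReal ((μ Y).toReal / 2) := by
      rw [hGiSup]
      refine iSup_le fun n => ?_
      calc μ (Gs n) ≤ μ (Fn n) := measure_mono Set.diff_subset
      _ ≤ ENNReal.ofReal ((μ Y).toReal / 2) :=
          (ENNReal.le_ofReal_iff_toReal_le (measure_ne_top μ _)
            (by positivity)).mpr (hPn n).2.2.1
    calc (μ Gset).toReal ≤ (ENNReal.ofReal ((μ Y).toReal / 2)).toReal :=
          ENNReal.toReal_mono ENNReal.ofReal_ne_top h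
    _ = (μ Y).toReal / 2 := ENNReal.toReal_ofReal (by positivity)
  · -- Følner boundary condition for Gset
    set C : ℕ → Set G := fun n => ⋂ m, ⋂ (_ : n ≤ m), (𝒢.rMul K (Gs m) \ Gs m) ∩ Y
      with hCdef
    have hCmono : Monotone C := by
      intro a b hab x hx
      simp only [hCdef, Set.mem_iInter] at hx ⊢
      intro k hk
      exact hx k (hab.trans hk)
    have hBsub : (𝒢.rMul K Gset \ Gset) ∩ Y ⊆ ⋃ n, C n := by
      rintro x ⟨⟨hxr, hxG⟩, hxY⟩
      obtain ⟨γ, ⟨hγK, hγs⟩, rfl⟩ := hxr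
      obtain ⟨n₀, hn₀⟩ := Set.mem_iUnion.mp hγs
      refine Set.mem_iUnion.mpr ⟨n₀, ?_⟩
      simp only [hCdef, Set.mem_iInter]
      intro k hk
      refine ⟨⟨⟨γ, ⟨hγK, Gmono hk hn₀⟩, rfl⟩, ?_⟩, hxY⟩
      exact fun hc => hxG (Set.mem_iUnion.mpr ⟨k, hc⟩)
    have h : μ ((𝒢.rMul K Gset \ Gset) ∩ Y) ≤ ENNReal.ofReal (ε * (μ Gset).toReal) := by
      calc μ ((𝒢.rMul K Gset \ Gset) ∩ Y) ≤ μ (⋃ n, C n) := measure_mono hBsub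
      _ = ⨆ n, μ (C n) := Directed.measure_iUnion hCmono.directed_le
      _ ≤ ENNReal.ofReal (ε * (μ Gset).toReal) := by
          refine iSup_le fun n => ?_
          refine le_trans (measure_mono ?_) (hbddμ n)
          exact fun x hx => by
            simpa using (Set.mem_iInter.mp (Set.mem_iInter.mp hx n)) le_rfl
    calc (μ ((𝒢.rMul K Gset \ Gset) ∩ Y)).toReal
        ≤ (ENNReal.ofReal (ε * (μ Gset).toReal)).toReal :=
          ENNReal.toReal_mono ENNReal.ofReal_ne_top h
    _ = ε * (μ Gset).toReal :=
          ENNReal.toReal_ofReal (mul_nonneg hε.le ENNReal.toReal_nonneg)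
  · -- maximality
    intro F' hF' hnull
    have h1 : ∀ n, μ (Fn n \ F') = 0 := by
      intro n
      refine measure_mono_null (t := N ∪ (Gset \ F')) ?_
        (by rw [measure_union_null_iff]; exact ⟨hNnull, hnull⟩)
      intro x hx
      by_cases hxN : x ∈ N
      · exact Or.inl hxN
      · exact Or.inr ⟨Set.mem_iUnion.mpr ⟨n, hx.1, hxN⟩, hx.2⟩
    have h2 : ∀ n, μ F' ≤ μ Gset + δs n := by
      intro n
      have hmem : μ F' ∈ μ '' {F'' | P F'' ∧ μ (Fn n \ F'') = 0} :=
        ⟨F', ⟨hF', h1 n⟩, rfl⟩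
      calc μ F' ≤ m (Fn n) := le_sSup hmem
      _ ≤ μ (Fn (n + 1)) + δs n := hSup n
      _ ≤ μ Gset + δs n := add_le_add_left (hFG (n + 1)) _
    have h3 : μ F' ≤ μ Gset := by
      refine ENNReal.le_of_forall_pos_le_add fun r hr _ => ?_
      obtain ⟨n, hn⟩ := ENNReal.exists_inv_nat_lt
        (by exact_mod_cast hr.ne' : (r : ENNReal) ≠ 0)
      have hδn : δs n ≤ (r : ENNReal) := by
        refine le_trans ?_ hn.le
        simp only [hδsdef]
        exact ENNReal.inv_le_inv.mpr (by exact_mod_cast Nat.le_succ n)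
      exact le_trans (h2 n) (add_le_add_right hδn _)
    have e1 : μ (Gset ∩ F') + μ (Gset \ F') = μ Gset := measure_inter_add_diff Gset hF'.1
    have e2 : μ (F' ∩ Gset) + μ (F' \ Gset) = μ F' := measure_inter_add_diff F' hGmeas
    rw [hnull, add_zero] at e1
    rw [Set.inter_comm, e1] at e2
    have : μ Gset + μ (F' \ Gset) ≤ μ Gset + 0 := by
      rw [add_zero, e2]; exact h3
    exact nonpos_iff_eq_zero.mp ((ENNReal.add_le_add_iff_left hGfin).mp this)
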